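/- Let A_1,...,A_N be d×d real matrices with non-negative entries. Then the limit as n→∞ of (Σ_{i_1,...,i_n=1}^N ‖A_{i_n}⋯A_{i_1}‖)^{1/n} exists and equals the spectral radius ρ(Σ_{i=1}^N A_i). -/

import Mathlib

open Filter Topology
open scoped ENNReal NNReal

noncomputable def opNorm {n : Type*} [Fintype n] [DecidableEq n] (A : Matrix n n ℝ) : ℝ :=
  ‖Matrix.toEuclideanCLM (𝕜 := ℝ) A‖

noncomputable def specRad {n : Type*} [Fintype n] [DecidableEq n] (B : Matrix n n ℝ) : ℝ :=
  sSup {r : ℝ | ∃ μ ∈ spectrum ℂ (B.map (fun x => (x : ℂ))), r = ‖μ‖}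

noncomputable def singularValues {d : ℕ} (A : Matrix (Fin d) (Fin d) ℝ) : Fin d → ℝ :=
  fun i => Real.sqrt ((Matrix.isHermitian_conjTranspose_mul_self A).eigenvalues
    (Tuple.sort (fun j => -((Matrix.isHermitian_conjTranspose_mul_self A).eigenvalues j)) i))

noncomputable def svf {d : ℕ} (A : Matrix (Fin d) (Fin d) ℝ) (s : ℝ) : ℝ :=
  if s < d then
    ∏ i : Fin d,
      if (i : ℤ) < ⌊s⌋ then singularValues A i
      else if (i : ℤ) = ⌊s⌋ then singularValues A i ^ (s - (⌊s⌋ : ℝ)) else 1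
  else |A.det| ^ (s / d)

def IsGenPerm {n : Type*} [Fintype n] (A : Matrix n n ℝ) : Prop :=
  (∀ i, ∃! j, A i j ≠ 0) ∧ (∀ j, ∃! i, A i j ≠ 0)

abbrev SIdx (d k : ℕ) := {p : Finset (Fin d) × Fin d // p.1.card = k ∧ p.2 ∉ p.1}

noncomputable def Pmat {d : ℕ} (s : ℝ) (k : ℕ) (π : Equiv.Perm (Fin d)) (a : Fin d → ℝ) :
    Matrix (SIdx d k) (SIdx d k) ℝ :=
  fun q p =>
    if q.1.1 = p.1.1.image π ∧ q.1.2 = π p.1.2 then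
      (∏ j ∈ p.1.1, |a j|) * |a p.1.2| ^ (s - (k : ℝ))
    else 0

noncomputable def pressure {d N : ℕ} (A : Fin N → Matrix (Fin d) (Fin d) ℝ) (s : ℝ) : ℝ :=
  ⨅ n : ℕ, (1 / ((n : ℝ) + 1)) *
    Real.log (∑ f : Fin (n + 1) → Fin N, svf ((List.ofFn fun m => A (f m)).prod) s)

/-! ### Auxiliary lemmas -/

lemma euc_coord_le {𝕜 : Type*} [RCLike 𝕜] {m : Type*} [Fintype m]
    (x : EuclideanSpace 𝕜 m) (i : m) : ‖x i‖ ≤ ‖x‖ := by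
  rw [EuclideanSpace.norm_eq]
  have h : ‖x i‖ = Real.sqrt (‖x i‖ ^ 2) := (Real.sqrt_sq (norm_nonneg _)).symm
  rw [h]
  exact Real.sqrt_le_sqrt
    (Finset.single_le_sum (f := fun j => ‖x j‖ ^ 2) (fun j _ => sq_nonneg _) (Finset.mem_univ i))

lemma euc_norm_le_sum {𝕜 : Type*} [RCLike 𝕜] {m : Type*} [Fintype m]
    (x : EuclideanSpace 𝕜 m) : ‖x‖ ≤ ∑ i, ‖x i‖ := by
  rw [EuclideanSpace.norm_eq]
  have h : ∑ i, ‖x i‖ ^ 2 ≤ (∑ i, ‖x i‖) ^ 2 :=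
    Finset.sum_sq_le_sq_sum_of_nonneg (fun i _ => norm_nonneg _)
  calc Real.sqrt (∑ i, ‖x i‖ ^ 2) ≤ Real.sqrt ((∑ i, ‖x i‖) ^ 2) := Real.sqrt_le_sqrt h
    _ = ∑ i, ‖x i‖ := Real.sqrt_sq (Finset.sum_nonneg fun i _ => norm_nonneg _)

lemma toEuclideanCLM_apply_coord {𝕜 : Type*} [RCLike 𝕜] {m : Type*} [Fintype m] [DecidableEq m]
    (M : Matrix m m 𝕜) (x : EuclideanSpace 𝕜 m) (k : m) :
    (Matrix.toEuclideanCLM (𝕜 := 𝕜) M x) k = ∑ l, M k l * x l := by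
  have h1 : (Matrix.toEuclideanCLM (𝕜 := 𝕜) M x) k
      = Matrix.toLin' M (WithLp.equiv _ _ x) k := by
    rw [Matrix.ofLp_toEuclideanCLM]; rfl
  rw [h1]
  simp [Matrix.toLin'_apply, Matrix.mulVec, dotProduct]

lemma opNorm_le_sum_entries {𝕜 : Type*} [RCLike 𝕜] {m : Type*} [Fintype m] [DecidableEq m]
    (M : Matrix m m 𝕜) :
    ‖Matrix.toEuclideanCLM (𝕜 := 𝕜) M‖ ≤ ∑ k, ∑ l, ‖M k l‖ := by
  refine ContinuousLinearMap.opNorm_le_bound _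
    (Finset.sum_nonneg fun _ _ => Finset.sum_nonneg fun _ _ => norm_nonneg _) fun x => ?_
  calc ‖Matrix.toEuclideanCLM (𝕜 := 𝕜) M x‖
      ≤ ∑ k, ‖(Matrix.toEuclideanCLM (𝕜 := 𝕜) M x) k‖ := euc_norm_le_sum _
    _ ≤ ∑ k, ∑ l, ‖M k l‖ * ‖x‖ := by
        refine Finset.sum_le_sum fun k _ => ?_
        rw [toEuclideanCLM_apply_coord]
        refine (norm_sum_le _ _).trans (Finset.sum_le_sum fun l _ => ?_)
        rw [norm_mul]
        exact mul_le_mul_of_nonneg_left (euc_coord_le x l) (norm_nonneg _)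
    _ = (∑ k, ∑ l, ‖M k l‖) * ‖x‖ := by rw [Finset.sum_mul]; simp [Finset.sum_mul]

lemma entry_le_opNorm {𝕜 : Type*} [RCLike 𝕜] {m : Type*} [Fintype m] [DecidableEq m]
    (M : Matrix m m 𝕜) (k l : m) :
    ‖M k l‖ ≤ ‖Matrix.toEuclideanCLM (𝕜 := 𝕜) M‖ := by
  have h1 : (Matrix.toEuclideanCLM (𝕜 := 𝕜) M (EuclideanSpace.single l 1)) k = M k l := by
    rw [toEuclideanCLM_apply_coord]
    simp [EuclideanSpace.single_apply]
  calc ‖M k l‖ = ‖(Matrix.toEuclideanCLM (𝕜 := 𝕜) M (EuclideanSpace.single l 1)) k‖ := by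
        rw [h1]
    _ ≤ ‖Matrix.toEuclideanCLM (𝕜 := 𝕜) M (EuclideanSpace.single l 1)‖ := euc_coord_le _ _
    _ ≤ ‖Matrix.toEuclideanCLM (𝕜 := 𝕜) M‖ * ‖(EuclideanSpace.single l (1:𝕜) :
          EuclideanSpace 𝕜 m)‖ := ContinuousLinearMap.le_opNorm _ _
    _ = ‖Matrix.toEuclideanCLM (𝕜 := 𝕜) M‖ := by
        rw [EuclideanSpace.norm_single, norm_one, mul_one]

lemma list_prod_nonneg {d : ℕ} (L : List (Matrix (Fin d) (Fin d) ℝ))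
    (h : ∀ M ∈ L, ∀ k l, 0 ≤ M k l) : ∀ k l, 0 ≤ L.prod k l := by
  induction L with
  | nil => intro k l; simp [Matrix.one_apply]; positivity
  | cons M L ih =>
      intro k l
      rw [List.prod_cons, Matrix.mul_apply]
      refine Finset.sum_nonneg fun j _ => mul_nonneg (h M List.mem_cons_self k j)
        (ih (fun M' hM' => h M' (List.mem_cons_of_mem _ hM')) j l)

set_option maxHeartbeats 1000000 in
lemma sum_pow_expand {d N : ℕ} (A : Fin N → Matrix (Fin d) (Fin d) ℝ) :
    ∀ n : ℕ, (∑ i, A i) ^ n = ∑ f : Fin n → Fin N, (List.ofFn fun m => A (f m)).prod := by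
  intro n
  induction n with
  | zero => simp
  | succ n ih =>
      rw [pow_succ', ih, Finset.mul_sum]
      have key : ∀ (i : Fin N) (f : Fin n → Fin N),
          (List.ofFn fun m => A ((Fin.cons i f : Fin (n+1) → Fin N) m)).prod
            = A i * (List.ofFn fun m => A (f m)).prod := by
        intro i f
        rw [List.ofFn_succ, List.prod_cons]
        simp
      calc (∑ f : Fin n → Fin N, (∑ i, A i) * (List.ofFn fun m => A (f m)).prod)
          = ∑ f : Fin n → Fin N, ∑ i, A i * (List.ofFn fun m => A (f m)).prod := by
            simp_rw [Finset.sum_mul]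
        _ = ∑ i, ∑ f : Fin n → Fin N, A i * (List.ofFn fun m => A (f m)).prod :=
            Finset.sum_comm
        _ = ∑ p : Fin N × (Fin n → Fin N), A p.1 * (List.ofFn fun m => A (p.2 m)).prod :=
            (Fintype.sum_prod_type
              (f := fun p : Fin N × (Fin n → Fin N) =>
                A p.1 * (List.ofFn fun m => A (p.2 m)).prod)).symm
        _ = ∑ g : Fin (n+1) → Fin N, (List.ofFn fun m => A (g m)).prod := by
            refine Fintype.sum_equiv (Fin.consEquiv (fun _ : Fin (n+1) => Fin N)) _ _ fun p => ?_
            exact (key p.1 p.2).symm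

section Gelfand

open scoped Matrix.Norms.L2Operator

lemma gelfand_matrix {d : ℕ} (Bc : Matrix (Fin d) (Fin d) ℂ)
    (hne : spectralRadius ℂ Bc ≠ ⊤) :
    Tendsto (fun n : ℕ => ‖Matrix.toEuclideanCLM (𝕜 := ℂ) (Bc ^ n)‖ ^ (1 / (n : ℝ))) atTop
      (𝓝 (spectralRadius ℂ Bc).toReal) := by
  have h := spectrum.pow_nnnorm_pow_one_div_tendsto_nhds_spectralRadius Bc
  have h2 := (ENNReal.tendsto_toReal hne).comp h
  refine h2.congr fun n => ?_
  show (((‖Bc ^ n‖₊ : ℝ≥0∞)) ^ (1 / (n : ℝ))).toReal = _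
  rw [← ENNReal.toReal_rpow, ENNReal.coe_toReal, coe_nnnorm]
  rfl

lemma specRad_eq {d : ℕ} (hd : 0 < d) (B : Matrix (Fin d) (Fin d) ℝ) :
    specRad B = (spectralRadius ℂ (B.map (fun x => (x : ℂ)))).toReal ∧
      spectralRadius ℂ (B.map (fun x => (x : ℂ))) ≠ ⊤ := by
  haveI : Nonempty (Fin d) := ⟨⟨0, hd⟩⟩
  set Bc := B.map (fun x : ℝ => (x : ℂ)) with hBc
  have hfin : (spectrum ℂ Bc).Finite := Matrix.finite_spectrum Bc
  have hnev : (spectrum ℂ Bc).Nonempty := spectrum.nonempty Bc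
  obtain ⟨μ₀, hμ₀, hmax⟩ := hfin.toFinset.exists_max_image (fun μ : ℂ => ‖μ‖)
    ((Set.Finite.toFinset_nonempty hfin).mpr hnev)
  rw [Set.Finite.mem_toFinset] at hμ₀
  have hmax' : ∀ μ ∈ spectrum ℂ Bc, ‖μ‖ ≤ ‖μ₀‖ := fun μ hμ =>
    hmax μ (hfin.mem_toFinset.mpr hμ)
  have hρdef : spectralRadius ℂ Bc = ⨆ k ∈ spectrum ℂ Bc, (‖k‖₊ : ℝ≥0∞) := rfl
  have hρ : spectralRadius ℂ Bc = (‖μ₀‖₊ : ℝ≥0∞) := by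
    rw [hρdef]
    apply le_antisymm
    · refine iSup₂_le fun μ hμ => ?_
      have h1 : ‖μ‖ ≤ ‖μ₀‖ := hmax' μ hμ
      have h2 : ‖μ‖₊ ≤ ‖μ₀‖₊ := by
        rw [← NNReal.coe_le_coe, coe_nnnorm, coe_nnnorm]
        exact h1
      exact_mod_cast h2
    · exact le_iSup₂ (f := fun μ (_ : μ ∈ spectrum ℂ Bc) => (‖μ‖₊ : ℝ≥0∞)) μ₀ hμ₀
  have hgreat : IsGreatest {r : ℝ | ∃ μ ∈ spectrum ℂ Bc, r = ‖μ‖}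
      (‖μ₀‖) := by
    constructor
    · exact ⟨μ₀, hμ₀, rfl⟩
    · rintro r ⟨μ, hμ, rfl⟩
      exact hmax' μ hμ
  constructor
  · show sSup {r : ℝ | ∃ μ ∈ spectrum ℂ Bc, r = ‖μ‖} = _
    rw [hgreat.csSup_eq, hρ, ENNReal.coe_toReal, coe_nnnorm]
  · rw [hρ]; exact ENNReal.coe_ne_top

end Gelfand

lemma tendsto_const_rpow_one_div {K : ℝ} (hK : 0 < K) :
    Tendsto (fun n : ℕ => K ^ (1 / (n : ℝ))) atTop (𝓝 1) := by
  have h0 : Tendsto (fun n : ℕ => 1 / (n : ℝ)) atTop (𝓝 0) := tendsto_one_div_atTop_nhds_zero_nat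
  have h := (Real.continuousAt_const_rpow (a := K) (b := 0) hK.ne').tendsto.comp h0
  simpa [Function.comp_def] using h

theorem stmt0 {d N : ℕ} (A : Fin N → Matrix (Fin d) (Fin d) ℝ)
    (hA : ∀ i k l, 0 ≤ A i k l) :
    Tendsto
      (fun n : ℕ =>
        (∑ f : Fin n → Fin N, opNorm (List.ofFn fun m => A (f m)).prod) ^ (1 / (n : ℝ)))
      atTop (nhds (specRad (∑ i, A i))) := by
  classical
  rcases Nat.eq_zero_or_pos d with hd | hd
  · -- degenerate case d = 0
    subst hd
    haveI : Subsingleton (Matrix (Fin 0) (Fin 0) ℂ) := ⟨fun a b => by ext k; exact k.elim0⟩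
    have hop : ∀ M : Matrix (Fin 0) (Fin 0) ℝ, opNorm M = 0 := fun M =>
      le_antisymm (le_of_le_of_eq (opNorm_le_sum_entries (𝕜 := ℝ) M) (by simp))
        (norm_nonneg _)
    have hspec : spectrum ℂ ((∑ i, A i).map (fun x : ℝ => (x : ℂ))) = ∅ := by
      ext μ
      simp [spectrum.mem_iff, isUnit_of_subsingleton]
    have hsp : specRad (∑ i, A i) = 0 := by
      have hset : {r : ℝ | ∃ μ ∈ spectrum ℂ ((∑ i, A i).map (fun x : ℝ => (x : ℂ))),
          r = ‖μ‖} = ∅ := by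
        simp [hspec]
      show sSup _ = 0
      rw [hset, Real.sSup_empty]
    rw [hsp]
    refine Tendsto.congr' ?_ (tendsto_const_nhds : Tendsto _ _ (𝓝 (0:ℝ)))
    filter_upwards [eventually_ge_atTop 1] with n hn
    have h1 : ((n : ℝ))⁻¹ ≠ 0 := by
      have : (0:ℝ) < n := by exact_mod_cast hn
      positivity
    simp [hop, Real.zero_rpow h1]
  · -- main case d ≥ 1
    have hd2 : (0:ℝ) < (d:ℝ)^2 := by positivity
    obtain ⟨hspecRad, hnetop⟩ := specRad_eq hd (∑ i, A i)
    set B : Matrix (Fin d) (Fin d) ℝ := ∑ i, A i with hB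
    set Bc : Matrix (Fin d) (Fin d) ℂ := B.map (fun x : ℝ => (x : ℂ)) with hBcdef
    have hPnn : ∀ (n : ℕ) (f : Fin n → Fin N) (k l : Fin d),
        0 ≤ ((List.ofFn fun m => A (f m)).prod) k l := by
      intro n f k l
      refine list_prod_nonneg _ ?_ k l
      intro M hM
      rw [List.mem_ofFn] at hM
      obtain ⟨m, rfl⟩ := hM
      exact hA _
    have hpow : ∀ n : ℕ, B ^ n = ∑ f : Fin n → Fin N, (List.ofFn fun m => A (f m)).prod :=
      sum_pow_expand A
    have hBn_nn : ∀ (n : ℕ) (k l : Fin d), 0 ≤ (B ^ n) k l := by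
      intro n k l
      rw [hpow n, Matrix.sum_apply]
      exact Finset.sum_nonneg fun f _ => hPnn n f k l
    have hBc_pow : ∀ n : ℕ, Bc ^ n = (B ^ n).map (fun x : ℝ => (x : ℂ)) := by
      intro n
      have h1 : Bc = Complex.ofRealHom.mapMatrix B := rfl
      rw [h1, ← map_pow]
      rfl
    -- The three comparison quantities
    have hE_expand : ∀ n : ℕ, (∑ k, ∑ l, (B ^ n) k l)
        = ∑ f : Fin n → Fin N, ∑ k, ∑ l, ((List.ofFn fun m => A (f m)).prod) k l := by
      intro n
      simp only [hpow n, Matrix.sum_apply]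
      calc (∑ k, ∑ l, ∑ f : Fin n → Fin N, ((List.ofFn fun m => A (f m)).prod) k l)
          = ∑ k, ∑ f : Fin n → Fin N, ∑ l, ((List.ofFn fun m => A (f m)).prod) k l :=
            Finset.sum_congr rfl fun k _ => Finset.sum_comm
        _ = ∑ f : Fin n → Fin N, ∑ k, ∑ l, ((List.ofFn fun m => A (f m)).prod) k l :=
            Finset.sum_comm
    have h3 : ∀ n : ℕ, (∑ f : Fin n → Fin N, opNorm (List.ofFn fun m => A (f m)).prod)
        ≤ ∑ k, ∑ l, (B ^ n) k l := by
      intro n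
      rw [hE_expand n]
      refine Finset.sum_le_sum fun f _ => ?_
      calc opNorm (List.ofFn fun m => A (f m)).prod
          ≤ ∑ k, ∑ l, ‖((List.ofFn fun m => A (f m)).prod) k l‖ :=
            opNorm_le_sum_entries _
        _ = ∑ k, ∑ l, ((List.ofFn fun m => A (f m)).prod) k l :=
            Finset.sum_congr rfl fun k _ => Finset.sum_congr rfl fun l _ =>
              Real.norm_of_nonneg (hPnn n f k l)
    have h4 : ∀ n : ℕ, (∑ k, ∑ l, (B ^ n) k l)
        ≤ (d:ℝ)^2 * ∑ f : Fin n → Fin N, opNorm (List.ofFn fun m => A (f m)).prod := by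
      intro n
      rw [hE_expand n, Finset.mul_sum]
      refine Finset.sum_le_sum fun f _ => ?_
      have hent : ∀ k l : Fin d, ((List.ofFn fun m => A (f m)).prod) k l
          ≤ opNorm (List.ofFn fun m => A (f m)).prod := by
        intro k l
        have h := entry_le_opNorm (𝕜 := ℝ) ((List.ofFn fun m => A (f m)).prod) k l
        rwa [Real.norm_of_nonneg (hPnn n f k l)] at h
      calc (∑ k, ∑ l, ((List.ofFn fun m => A (f m)).prod) k l)
          ≤ ∑ _k : Fin d, ∑ _l : Fin d, opNorm (List.ofFn fun m => A (f m)).prod :=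
            Finset.sum_le_sum fun k _ => Finset.sum_le_sum fun l _ => hent k l
        _ = (d:ℝ)^2 * opNorm (List.ofFn fun m => A (f m)).prod := by
            simp only [Finset.sum_const, Finset.card_univ, Fintype.card_fin, nsmul_eq_mul]
            ring
    have h1 : ∀ n : ℕ, ‖Matrix.toEuclideanCLM (𝕜 := ℂ) (Bc ^ n)‖
        ≤ ∑ k, ∑ l, (B ^ n) k l := by
      intro n
      rw [hBc_pow n]
      calc ‖Matrix.toEuclideanCLM (𝕜 := ℂ) ((B ^ n).map (fun x : ℝ => (x : ℂ)))‖
          ≤ ∑ k, ∑ l, ‖((B ^ n).map (fun x : ℝ => (x : ℂ))) k l‖ :=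
            opNorm_le_sum_entries _
        _ = ∑ k, ∑ l, (B ^ n) k l := by
            refine Finset.sum_congr rfl fun k _ => Finset.sum_congr rfl fun l _ => ?_
            rw [Matrix.map_apply, Complex.norm_real, Real.norm_eq_abs,
              abs_of_nonneg (hBn_nn n k l)]
    have h2 : ∀ n : ℕ, (∑ k, ∑ l, (B ^ n) k l)
        ≤ (d:ℝ)^2 * ‖Matrix.toEuclideanCLM (𝕜 := ℂ) (Bc ^ n)‖ := by
      intro n
      have hent : ∀ k l : Fin d, (B ^ n) k l
          ≤ ‖Matrix.toEuclideanCLM (𝕜 := ℂ) (Bc ^ n)‖ := by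
        intro k l
        have h := entry_le_opNorm (𝕜 := ℂ) (Bc ^ n) k l
        have heq : ‖(Bc ^ n) k l‖ = (B ^ n) k l := by
          rw [hBc_pow n, Matrix.map_apply, Complex.norm_real, Real.norm_eq_abs,
            abs_of_nonneg (hBn_nn n k l)]
        rwa [heq] at h
      calc (∑ k, ∑ l, (B ^ n) k l)
          ≤ ∑ _k : Fin d, ∑ _l : Fin d, ‖Matrix.toEuclideanCLM (𝕜 := ℂ) (Bc ^ n)‖ :=
            Finset.sum_le_sum fun k _ => Finset.sum_le_sum fun l _ => hent k l
        _ = (d:ℝ)^2 * ‖Matrix.toEuclideanCLM (𝕜 := ℂ) (Bc ^ n)‖ := by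
            simp only [Finset.sum_const, Finset.card_univ, Fintype.card_fin, nsmul_eq_mul]
            ring
    have hSnn : ∀ n : ℕ, (0:ℝ)
        ≤ ∑ f : Fin n → Fin N, opNorm (List.ofFn fun m => A (f m)).prod :=
      fun n => Finset.sum_nonneg fun f _ => norm_nonneg _
    have hCnn : ∀ n : ℕ, (0:ℝ) ≤ ‖Matrix.toEuclideanCLM (𝕜 := ℂ) (Bc ^ n)‖ :=
      fun n => norm_nonneg _
    have hCS_low : ∀ n : ℕ, (1/(d:ℝ)^2) * ‖Matrix.toEuclideanCLM (𝕜 := ℂ) (Bc ^ n)‖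
        ≤ ∑ f : Fin n → Fin N, opNorm (List.ofFn fun m => A (f m)).prod := by
      intro n
      have hh := (h1 n).trans (h4 n)
      calc (1/(d:ℝ)^2) * ‖Matrix.toEuclideanCLM (𝕜 := ℂ) (Bc ^ n)‖
          ≤ (1/(d:ℝ)^2) * ((d:ℝ)^2
              * ∑ f : Fin n → Fin N, opNorm (List.ofFn fun m => A (f m)).prod) :=
            mul_le_mul_of_nonneg_left hh (by positivity)
        _ = ∑ f : Fin n → Fin N, opNorm (List.ofFn fun m => A (f m)).prod := by
            field_simp
    have hCS_up : ∀ n : ℕ, (∑ f : Fin n → Fin N, opNorm (List.ofFn fun m => A (f m)).prod)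
        ≤ (d:ℝ)^2 * ‖Matrix.toEuclideanCLM (𝕜 := ℂ) (Bc ^ n)‖ :=
      fun n => (h3 n).trans (h2 n)
    have hlow : ∀ n : ℕ,
        ((1/(d:ℝ)^2) ^ (1/(n:ℝ))) * (‖Matrix.toEuclideanCLM (𝕜 := ℂ) (Bc ^ n)‖ ^ (1/(n:ℝ)))
        ≤ (∑ f : Fin n → Fin N, opNorm (List.ofFn fun m => A (f m)).prod) ^ (1/(n:ℝ)) := by
      intro n
      rw [← Real.mul_rpow (by positivity) (hCnn n)]
      exact Real.rpow_le_rpow (by positivity) (hCS_low n) (by positivity)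
    have hup : ∀ n : ℕ,
        (∑ f : Fin n → Fin N, opNorm (List.ofFn fun m => A (f m)).prod) ^ (1/(n:ℝ))
        ≤ ((d:ℝ)^2) ^ (1/(n:ℝ)) * ‖Matrix.toEuclideanCLM (𝕜 := ℂ) (Bc ^ n)‖ ^ (1/(n:ℝ)) := by
      intro n
      rw [← Real.mul_rpow (by positivity) (hCnn n)]
      exact Real.rpow_le_rpow (hSnn n) (hCS_up n) (by positivity)
    have hG := gelfand_matrix Bc hnetop
    have hlowlim : Tendsto (fun n : ℕ =>
        ((1/(d:ℝ)^2) ^ (1/(n:ℝ))) * (‖Matrix.toEuclideanCLM (𝕜 := ℂ) (Bc ^ n)‖ ^ (1/(n:ℝ))))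
        atTop (𝓝 ((spectralRadius ℂ Bc).toReal)) := by
      have hh := (tendsto_const_rpow_one_div (K := 1/(d:ℝ)^2) (by positivity)).mul hG
      simpa only [one_mul] using hh
    have huplim : Tendsto (fun n : ℕ =>
        ((d:ℝ)^2) ^ (1/(n:ℝ)) * (‖Matrix.toEuclideanCLM (𝕜 := ℂ) (Bc ^ n)‖ ^ (1/(n:ℝ))))
        atTop (𝓝 ((spectralRadius ℂ Bc).toReal)) := by
      have hh := (tendsto_const_rpow_one_div (K := (d:ℝ)^2) hd2).mul hG
      simpa only [one_mul] using hh
    rw [hspecRad]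
    exact tendsto_of_tendsto_of_tendsto_of_le_of_le hlowlim huplim hlow hup
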